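/- Let f be analytic on an open set N ⊂ ℂ containing ℝ, with ρ̄₀ := inf_{x∈ℝ} rc(f,x) > 0 (rc denotes radius of convergence of the Taylor series) and with sup_{|Im z| ≤ c}|f'(z)| < ∞ for every c ∈ (0, ρ̄₀). Set d̄_k = sup_{x∈ℝ}|f^{(k)}(x)|/k!. Then the radius of convergence of the power series Σ_{k≥1} d̄_k z^k equals ρ̄₀. -/

import Mathlib

open Metric Real

/-- Cauchy estimate. -/
lemma cauchy_est (g : ℂ → ℂ) (x : ℂ) (r M : ℝ) (hr : 0 < r)
    (hdiff : DifferentiableOn ℂ g (closedBall x r))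
    (hM : ∀ z ∈ sphere x r, ‖g z‖ ≤ M) (k : ℕ) :
    ‖iteratedDeriv k g x‖ / (k.factorial : ℝ) ≤ M / r ^ k := by
  lift r to NNReal using hr.le
  have hr0 : (0 : NNReal) < r := by exact_mod_cast hr
  have h := hdiff.hasFPowerSeriesOnBall hr0
  set p := cauchyPowerSeries g x r with hp
  have h1 : (k.factorial : ℝ) • p k (fun _ => (1:ℂ)) = iteratedDeriv k g x := by
    rw [iteratedDeriv_eq_iteratedFDeriv, Nat.cast_smul_eq_nsmul]
    exact h.factorial_smul (1:ℂ) k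
  have h2 : ‖iteratedDeriv k g x‖ = (k.factorial : ℝ) * ‖p k (fun _ => (1:ℂ))‖ := by
    rw [← h1, norm_smul]
    simp
  have h3 : ‖p k (fun _ => (1:ℂ))‖ ≤ ‖p k‖ := by
    have := (p k).le_opNorm (fun _ => (1:ℂ))
    simpa using this
  have hcont : Continuous fun θ : ℝ => ‖g (circleMap x r θ)‖ := by
    refine Continuous.norm ?_
    exact (hdiff.continuousOn.comp_continuous (continuous_circleMap _ _)
      (fun θ => sphere_subset_closedBall (circleMap_mem_sphere x hr.le θ)))
  have hint : (∫ θ : ℝ in (0:ℝ)..2 * π, ‖g (circleMap x r θ)‖) ≤ 2 * π * M := by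
    have := intervalIntegral.integral_mono_on (μ := MeasureTheory.volume) (a := (0:ℝ)) (b := 2 * π)
      (f := fun θ => ‖g (circleMap x r θ)‖) (g := fun _ => M)
      (by positivity) (hcont.intervalIntegrable 0 (2*π)) intervalIntegrable_const
      (fun θ _ => hM _ (circleMap_mem_sphere x hr.le θ))
    simpa [mul_comm] using this
  have hMnn : 0 ≤ M := le_trans (norm_nonneg _) (hM _ (circleMap_mem_sphere x hr.le 0))
  have h4 : ‖p k‖ ≤ M * (r : ℝ)⁻¹ ^ k := by
    refine (norm_cauchyPowerSeries_le g x r k).trans ?_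
    rw [abs_of_nonneg hr.le]
    gcongr
    rw [inv_mul_le_iff₀ (by positivity)]
    simpa [mul_comm, mul_assoc] using hint
  calc ‖iteratedDeriv k g x‖ / (k.factorial : ℝ)
      = ‖p k (fun _ => (1:ℂ))‖ := by
        rw [h2]; field_simp
    _ ≤ M * (r:ℝ)⁻¹ ^ k := h3.trans h4
    _ = M / r ^ k := by rw [inv_pow, div_eq_mul_inv]

/-- If `f` is analytic on an open set containing `ℝ` with `ρ̄₀ = inf_x rc(f,x) > 0` and
`f'` bounded on every horizontal strip of half-width `< ρ̄₀`, then the radius of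
convergence of `Σ_{k≥1} d̄_k z^k`, `d̄_k = sup_x |f⁽ᵏ⁾(x)|/k!`, equals `ρ̄₀`. -/
theorem radius_of_sup_deriv_series (f : ℂ → ℂ) (N : Set ℂ) (hN : IsOpen N)
    (hNreal : ∀ x : ℝ, (x : ℂ) ∈ N) (hf : DifferentiableOn ℂ f N)
    (rc : ℝ → ℝ) (hrcnn : ∀ x, 0 ≤ rc x)
    (hrc : ∀ x : ℝ,
      (∀ c : ℝ, 0 ≤ c → c < rc x →
        Summable fun k : ℕ => ‖iteratedDeriv k f (x : ℂ)‖ / (k.factorial : ℝ) * c ^ k) ∧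
      (∀ c : ℝ, rc x < c →
        ¬ Summable fun k : ℕ => ‖iteratedDeriv k f (x : ℂ)‖ / (k.factorial : ℝ) * c ^ k))
    (ρ : ℝ) (hρ : IsGLB (Set.range rc) ρ) (hρpos : 0 < ρ)
    (hstrip : ∀ c : ℝ, 0 < c → c < ρ →
      (∀ z : ℂ, |z.im| ≤ c → z ∈ N) ∧ ∃ M : ℝ, ∀ z : ℂ, |z.im| ≤ c → ‖deriv f z‖ ≤ M)
    (d : ℕ → ℝ)
    (hd : ∀ k : ℕ, 1 ≤ k →
      IsLUB (Set.range fun x : ℝ => ‖iteratedDeriv k f (x : ℂ)‖ / (k.factorial : ℝ)) (d k)) :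
    (∀ c : ℝ, 0 ≤ c → c < ρ → Summable fun k : ℕ => d (k + 1) * c ^ (k + 1)) ∧
    (∀ c : ℝ, ρ < c → ¬ Summable fun k : ℕ => d (k + 1) * c ^ (k + 1)) := by
  constructor
  · intro c hc0 hcρ
    rcases eq_or_lt_of_le hc0 with h0 | hcpos
    · have : (fun k : ℕ => d (k + 1) * c ^ (k + 1)) = fun _ => 0 := by
        funext k; rw [← h0]; simp
      rw [this]; exact summable_zero
    obtain ⟨c', hcc', hc'ρ⟩ := exists_between hcρ
    have hc'pos : 0 < c' := hcpos.trans hcc'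
    obtain ⟨hsub, M, hM⟩ := hstrip c' hc'pos hc'ρ
    have hg : DifferentiableOn ℂ (deriv f) N :=
      ((hf.analyticOnNhd hN).deriv).differentiableOn
    have hstripmem : ∀ x : ℝ, ∀ z ∈ closedBall (x : ℂ) c', |z.im| ≤ c' := by
      intro x z hz
      calc |z.im| = |(z - (x : ℂ)).im| := by simp
        _ ≤ ‖z - (x : ℂ)‖ := Complex.abs_im_le_norm _
        _ = dist z (x : ℂ) := by rw [Complex.dist_eq]
        _ ≤ c' := mem_closedBall.mp hz
    have key : ∀ k : ℕ, d (k + 1) ≤ M / c' ^ k := by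
      intro k
      refine (hd (k + 1) (Nat.le_add_left 1 k)).2 ?_
      rintro y ⟨x, rfl⟩
      have hest := cauchy_est (deriv f) (x : ℂ) c' M hc'pos
        (hg.mono fun z hz => hsub z (hstripmem x z hz))
        (fun z hz => hM z (hstripmem x z (sphere_subset_closedBall hz))) k
      rw [iteratedDeriv_succ']
      calc ‖iteratedDeriv k (deriv f) (x : ℂ)‖ / ((k + 1).factorial : ℝ)
          ≤ ‖iteratedDeriv k (deriv f) (x : ℂ)‖ / (k.factorial : ℝ) := by
            gcongr
            exact Nat.le_succ k
        _ ≤ M / c' ^ k := hest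
    have hMnn : 0 ≤ M := by
      have h1 : (0:ℝ) ≤ d 1 := le_trans (by positivity) ((hd 1 le_rfl).1 ⟨0, rfl⟩)
      have h2 := key 0
      simp only [pow_zero, div_one, zero_add] at h2
      linarith
    have hdnn : ∀ k : ℕ, 0 ≤ d (k + 1) := by
      intro k
      refine le_trans ?_ ((hd (k + 1) (Nat.le_add_left 1 k)).1 ⟨0, rfl⟩)
      positivity
    refine Summable.of_nonneg_of_le
      (fun k => mul_nonneg (hdnn k) (pow_nonneg hc0 _)) (fun k => ?_)
      (((summable_geometric_of_lt_one (by positivity)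
        ((div_lt_one hc'pos).mpr hcc')).mul_left (M * c)))
    calc d (k + 1) * c ^ (k + 1)
        ≤ M / c' ^ k * c ^ (k + 1) := by
          exact mul_le_mul_of_nonneg_right (key k) (pow_nonneg hc0 _)
      _ = M * c * (c / c') ^ k := by
          rw [div_pow, pow_succ]
          ring
  · intro c hc hsum
    obtain ⟨x, hx⟩ : ∃ x : ℝ, rc x < c := by
      by_contra hcon
      push_neg at hcon
      have : c ∈ lowerBounds (Set.range rc) := by rintro y ⟨x, rfl⟩; exact hcon x
      exact absurd (hρ.2 this) (not_le.mpr hc)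
    refine (hrc x).2 c hx ?_
    rw [← summable_nat_add_iff 1]
    have hcpos : 0 < c := hρpos.trans hc
    refine Summable.of_nonneg_of_le
      (fun k => mul_nonneg (by positivity) (pow_nonneg hcpos.le _)) (fun k => ?_) hsum
    exact mul_le_mul_of_nonneg_right ((hd (k + 1) (Nat.le_add_left 1 k)).1 ⟨x, rfl⟩)
      (pow_nonneg hcpos.le _)
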